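/- (Lemma 1, asymptotic orthogonality) Let Nx, Ny be positive integers, N = Nx·Ny, and let (φ₁, θ₁), (φ₂, θ₂) be two direction pairs with δx = cos φ₁ cos θ₁ − cos φ₂ cos θ₂ and δy = sin φ₁ cos θ₁ − sin φ₂ cos θ₂, and assume sin(π δx/2) ≠ 0 and sin(π δy/2) ≠ 0. Then the crosstalk coefficient is bounded as |⟨v(φ₁, θ₁), v(φ₂, θ₂)⟩|² / N ≤ 1 / ( N · sin²(π δx/2) · sin²(π δy/2) ); in particular, the crosstalk coefficient tends to 0 as N = Nx·Ny → ∞, so distinct steering vectors become asymptotically orthogonal. -/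

import Mathlib

lemma abs_exp_mul_I_sub_one (x : ℝ) :
    ‖Complex.exp ((x : ℂ) * Complex.I) - 1‖ = 2 * |Real.sin (x / 2)| := by
  have hc : Real.cos x = 1 - 2 * Real.sin (x / 2) ^ 2 := by
    have := Real.cos_two_mul (x / 2)
    have h2 := Real.sin_sq_add_cos_sq (x / 2)
    have : Real.cos (2 * (x / 2)) = 2 * Real.cos (x / 2) ^ 2 - 1 := Real.cos_two_mul _
    rw [show 2 * (x / 2) = x by ring] at this
    nlinarith
  have hs : Real.sin x = 2 * Real.sin (x / 2) * Real.cos (x / 2) := by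
    have := Real.sin_two_mul (x / 2)
    rw [show 2 * (x / 2) = x by ring] at this
    linarith
  have hfact : Complex.exp ((x : ℂ) * Complex.I) - 1
      = Complex.exp (((x / 2 : ℝ) : ℂ) * Complex.I) *
        (2 * (Real.sin (x / 2) : ℂ) * Complex.I) := by
    rw [Complex.exp_mul_I, Complex.exp_mul_I]
    rw [show Complex.cos ((x:ℂ)) = ((Real.cos x : ℝ) : ℂ) by simp [Complex.ofReal_cos],
        show Complex.sin ((x:ℂ)) = ((Real.sin x : ℝ) : ℂ) by simp [Complex.ofReal_sin],
        show Complex.cos (((x/2:ℝ):ℂ)) = ((Real.cos (x/2) : ℝ) : ℂ) by simp [Complex.ofReal_cos],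
        show Complex.sin (((x/2:ℝ):ℂ)) = ((Real.sin (x/2) : ℝ) : ℂ) by simp [Complex.ofReal_sin],
        hc, hs]
    push_cast
    ring_nf
    simp [Complex.I_sq]
    ring
  rw [hfact, norm_mul, norm_mul, norm_mul, Complex.norm_exp_ofReal_mul_I, Complex.norm_I,
    Complex.norm_real]
  simp

lemma geom_abs_le (t : ℝ) (h : Real.sin (Real.pi * t / 2) ≠ 0) (M : ℕ) :
    ‖∑ n : Fin M, Complex.exp ((n : ℂ) * (((Real.pi * t : ℝ) : ℂ) * Complex.I))‖
      ≤ 1 / |Real.sin (Real.pi * t / 2)| := by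
  set z : ℂ := Complex.exp (((Real.pi * t : ℝ) : ℂ) * Complex.I) with hz
  have habs : ‖z - 1‖ = 2 * |Real.sin (Real.pi * t / 2)| := by
    rw [hz, abs_exp_mul_I_sub_one]
  have hz1 : z ≠ 1 := by
    intro hzz
    rw [hzz, sub_self, norm_zero] at habs
    exact h (abs_eq_zero.mp (by linarith))
  have hsum : (∑ n : Fin M, Complex.exp ((n : ℂ) * (((Real.pi * t : ℝ) : ℂ) * Complex.I)))
      = (z ^ M - 1) / (z - 1) := by
    rw [← geom_sum_eq hz1 M,
      Fin.sum_univ_eq_sum_range (fun n => Complex.exp ((n : ℂ) * (((Real.pi * t : ℝ) : ℂ) * Complex.I))) M]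
    refine Finset.sum_congr rfl fun n _ => ?_
    rw [hz, ← Complex.exp_nat_mul]
  rw [hsum, norm_div, habs]
  have hpos : 0 < |Real.sin (Real.pi * t / 2)| := abs_pos.mpr h
  rw [div_le_div_iff₀ (by positivity) (by positivity), one_mul]
  have h1 : ‖z ^ M - 1‖ ≤ 2 := by
    calc ‖z ^ M - 1‖ ≤ ‖z ^ M‖ + ‖(1 : ℂ)‖ :=
          (norm_sub_le _ _)
      _ ≤ 2 := by
          rw [norm_pow, hz, Complex.norm_exp_ofReal_mul_I, one_pow, norm_one]; norm_num
  nlinarith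



/-- The steering vector of a half-wavelength spaced uniform planar array with
`Nx × Ny` elements, toward azimuth `φ` and elevation `θ`. -/
noncomputable def upaSteering (Nx Ny : ℕ) (φ θ : ℝ) : Fin Nx × Fin Ny → ℂ :=
  fun p =>
    Complex.exp (-Complex.I * (Real.pi : ℂ) * (p.1 : ℂ) * ((Real.cos φ * Real.cos θ : ℝ) : ℂ)) *
    Complex.exp (-Complex.I * (Real.pi : ℂ) * (p.2 : ℂ) * ((Real.sin φ * Real.cos θ : ℝ) : ℂ))

/-- The crosstalk coefficient `|⟨v(φ₁,θ₁), v(φ₂,θ₂)⟩|² / N` between two UPA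
steering vectors, with `N = Nx · Ny`. -/
noncomputable def upaCrosstalk (Nx Ny : ℕ) (φ₁ θ₁ φ₂ θ₂ : ℝ) : ℝ :=
  (‖(∑ p : Fin Nx × Fin Ny,
      star (upaSteering Nx Ny φ₁ θ₁ p) * upaSteering Nx Ny φ₂ θ₂ p)‖)^2
    / ((Nx : ℝ) * (Ny : ℝ))

lemma term_eq (a1 b1 a2 b2 : ℝ) (n m : ℕ) :
    star (Complex.exp (-Complex.I * (Real.pi : ℂ) * (n : ℂ) * (a1 : ℂ)) *
        Complex.exp (-Complex.I * (Real.pi : ℂ) * (m : ℂ) * (b1 : ℂ))) *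
      (Complex.exp (-Complex.I * (Real.pi : ℂ) * (n : ℂ) * (a2 : ℂ)) *
        Complex.exp (-Complex.I * (Real.pi : ℂ) * (m : ℂ) * (b2 : ℂ)))
    = Complex.exp ((n : ℂ) * (((Real.pi * (a1 - a2) : ℝ) : ℂ) * Complex.I)) *
      Complex.exp ((m : ℂ) * (((Real.pi * (b1 - b2) : ℝ) : ℂ) * Complex.I)) := by
  have hc : ∀ (r : ℝ) (k : ℕ),
      (starRingEnd ℂ) (-Complex.I * (Real.pi : ℂ) * (k : ℂ) * (r : ℂ))
        = Complex.I * (Real.pi : ℂ) * (k : ℂ) * (r : ℂ) := by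
    intro r k
    simp [map_mul, Complex.conj_I, Complex.conj_ofReal]
  simp only [Complex.star_def, map_mul, ← Complex.exp_conj, hc]
  simp only [← Complex.exp_add]
  congr 1
  push_cast
  ring

lemma upa_sum_factor (Nx Ny : ℕ) (φ₁ θ₁ φ₂ θ₂ δx δy : ℝ)
    (hδx : δx = Real.cos φ₁ * Real.cos θ₁ - Real.cos φ₂ * Real.cos θ₂)
    (hδy : δy = Real.sin φ₁ * Real.cos θ₁ - Real.sin φ₂ * Real.cos θ₂) :
    (∑ p : Fin Nx × Fin Ny, star (upaSteering Nx Ny φ₁ θ₁ p) * upaSteering Nx Ny φ₂ θ₂ p)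
      = (∑ n : Fin Nx, Complex.exp ((n : ℂ) * (((Real.pi * δx : ℝ) : ℂ) * Complex.I))) *
        (∑ m : Fin Ny, Complex.exp ((m : ℂ) * (((Real.pi * δy : ℝ) : ℂ) * Complex.I))) := by
  rw [Finset.sum_mul_sum, ← Finset.sum_product', Fintype.sum_prod_type]
  rw [Finset.sum_product]
  refine Finset.sum_congr rfl fun n _ => Finset.sum_congr rfl fun m _ => ?_
  subst hδx hδy
  exact term_eq _ _ _ _ n m

/-- Lemma 1 (asymptotic orthogonality): the crosstalk coefficient is bounded by
`1 / (N sin²(πδx/2) sin²(πδy/2))` with `N = Nx·Ny`; in particular, it tends to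
`0` as `N = Nx·Ny → ∞`, so distinct steering vectors become asymptotically
orthogonal. -/
theorem upa_crosstalk_le_and_tendsto_zero (φ₁ θ₁ φ₂ θ₂ δx δy : ℝ)
    (hδx : δx = Real.cos φ₁ * Real.cos θ₁ - Real.cos φ₂ * Real.cos θ₂)
    (hδy : δy = Real.sin φ₁ * Real.cos θ₁ - Real.sin φ₂ * Real.cos θ₂)
    (hx : Real.sin (Real.pi * δx / 2) ≠ 0) (hy : Real.sin (Real.pi * δy / 2) ≠ 0) :
    (∀ Nx Ny : ℕ, 0 < Nx → 0 < Ny →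
      upaCrosstalk Nx Ny φ₁ θ₁ φ₂ θ₂ ≤
        1 / (((Nx : ℝ) * (Ny : ℝ)) *
          Real.sin (Real.pi * δx / 2)^2 * Real.sin (Real.pi * δy / 2)^2)) ∧
    (∀ Nxf Nyf : ℕ → ℕ, (∀ k, 0 < Nxf k) → (∀ k, 0 < Nyf k) →
      Filter.Tendsto (fun k => Nxf k * Nyf k) Filter.atTop Filter.atTop →
      Filter.Tendsto (fun k => upaCrosstalk (Nxf k) (Nyf k) φ₁ θ₁ φ₂ θ₂)
        Filter.atTop (nhds 0)) := by
  set sx := Real.sin (Real.pi * δx / 2) with hsx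
  set sy := Real.sin (Real.pi * δy / 2) with hsy
  have hc : (0:ℝ) < sx ^ 2 * sy ^ 2 := by positivity
  have hbound : ∀ Nx Ny : ℕ, 0 < Nx → 0 < Ny →
      upaCrosstalk Nx Ny φ₁ θ₁ φ₂ θ₂ ≤ 1 / (((Nx : ℝ) * (Ny : ℝ)) * sx ^ 2 * sy ^ 2) := by
    intro Nx Ny hNx hNy
    have hN : (0:ℝ) < (Nx : ℝ) * (Ny : ℝ) := by positivity
    unfold upaCrosstalk
    rw [upa_sum_factor Nx Ny φ₁ θ₁ φ₂ θ₂ δx δy hδx hδy, norm_mul]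
    have h1 := geom_abs_le δx hx Nx
    have h2 := geom_abs_le δy hy Ny
    have hmul : ‖∑ n : Fin Nx, Complex.exp ((n : ℂ) * (((Real.pi * δx : ℝ) : ℂ) * Complex.I))‖ *
        ‖∑ m : Fin Ny, Complex.exp ((m : ℂ) * (((Real.pi * δy : ℝ) : ℂ) * Complex.I))‖
        ≤ 1 / |sx| * (1 / |sy|) :=
      mul_le_mul h1 h2 (norm_nonneg _) (by positivity)
    have hsq : (‖∑ n : Fin Nx, Complex.exp ((n : ℂ) * (((Real.pi * δx : ℝ) : ℂ) * Complex.I))‖ *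
        ‖∑ m : Fin Ny, Complex.exp ((m : ℂ) * (((Real.pi * δy : ℝ) : ℂ) * Complex.I))‖) ^ 2
        ≤ 1 / (sx ^ 2 * sy ^ 2) := by
      calc _ ≤ (1 / |sx| * (1 / |sy|)) ^ 2 := by
              apply pow_le_pow_left₀ (by positivity) hmul
        _ = 1 / (sx ^ 2 * sy ^ 2) := by
              rw [mul_pow, div_pow, div_pow, one_pow, sq_abs, sq_abs]
              rw [div_mul_div_comm, one_mul]
    calc _ ≤ (1 / (sx ^ 2 * sy ^ 2)) / ((Nx : ℝ) * (Ny : ℝ)) := by gcongr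
      _ = 1 / (((Nx : ℝ) * (Ny : ℝ)) * sx ^ 2 * sy ^ 2) := by
          rw [div_div]; congr 1; ring
  refine ⟨hbound, fun Nxf Nyf hx' hy' hN => ?_⟩
  have hg : Filter.Tendsto (fun k => 1 / (((Nxf k * Nyf k : ℕ) : ℝ) * (sx ^ 2 * sy ^ 2)))
      Filter.atTop (nhds 0) := by
    simp only [one_div]
    exact (Filter.Tendsto.atTop_mul_const hc
      (tendsto_natCast_atTop_atTop.comp hN)).inv_tendsto_atTop
  refine squeeze_zero (fun k => ?_) (fun k => ?_) hg
  · unfold upaCrosstalk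
    positivity
  · have := hbound (Nxf k) (Nyf k) (hx' k) (hy' k)
    calc upaCrosstalk (Nxf k) (Nyf k) φ₁ θ₁ φ₂ θ₂
        ≤ 1 / (((Nxf k : ℝ) * (Nyf k : ℝ)) * sx ^ 2 * sy ^ 2) := this
      _ = 1 / (((Nxf k * Nyf k : ℕ) : ℝ) * (sx ^ 2 * sy ^ 2)) := by push_cast; ring_nf
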